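/- Let S be a local operator system contained in a unital Pro-C*-algebra A, and let φ : S → ℂ be a local positive linear functional. Then φ extends to a local positive linear functional Φ on all of A, with Φ(1) = φ(1). -/

import Mathlib

open scoped ComplexOrder

noncomputable section

variable {V : Type} [AddCommGroup V] [Module ℂ V]

/-- Conjugation `Xᴴ A X` of a `V`-valued matrix by a scalar matrix `X`. -/
def sconj {n m : ℕ} (X : Matrix (Fin n) (Fin m) ℂ)
    (A : Matrix (Fin n) (Fin n) V) : Matrix (Fin m) (Fin m) V :=
  Matrix.of fun i j => ∑ p, ∑ q, ((starRingEnd ℂ) (X p i) * X q j) • A p q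

/-- A (not necessarily proper) cone in a complex vector space. -/
def IsVCone {M : Type} [AddCommGroup M] [Module ℂ M] (C : Set M) : Prop :=
  (0 : M) ∈ C ∧ (∀ x ∈ C, ∀ y ∈ C, x + y ∈ C) ∧
    ∀ r : ℝ, 0 ≤ r → ∀ x ∈ C, (r : ℂ) • x ∈ C

/-- A 2×2 block matrix of `n × n` blocks, reindexed to `Fin (n+n)`. -/
def blk {n : ℕ} (A B C D : Matrix (Fin n) (Fin n) V) :
    Matrix (Fin (n + n)) (Fin (n + n)) V :=
  Matrix.reindex finSumFinEquiv finSumFinEquiv (Matrix.fromBlocks A B C D)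

/-- The diagonal matrix `diag (e, …, e)`. -/
def diagE (e : V) (n : ℕ) : Matrix (Fin n) (Fin n) V :=
  Matrix.diagonal fun _ => e

variable [StarAddMonoid V] [StarModule ℂ V]

/-- The seminorm at level `(α, n)` induced by the matrix cones `C` and the unit `e`:
`‖X‖_α^n = inf { r ≥ 0 : [[r eₙ, X],[X*, r eₙ]] ∈ C_α^{2n} }`. -/
def nrm {Γ : Type} (C : Γ → (k : ℕ) → Set (Matrix (Fin k) (Fin k) V)) (e : V)
    (α : Γ) (n : ℕ) (X : Matrix (Fin n) (Fin n) V) : ℝ :=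
  sInf {r : ℝ | 0 ≤ r ∧
    blk ((r : ℂ) • diagE e n) X (star X) ((r : ℂ) • diagE e n) ∈ C α (n + n)}

/-- A local matrix *-ordering on `V`: a downward filtered family of compatible matrix
cones of hermitian matrices whose total intersection with their negatives is trivial. -/
structure LMOrder (Γ : Type) (V : Type) [AddCommGroup V] [Module ℂ V]
    [StarAddMonoid V] [StarModule ℂ V] where
  C : Γ → (n : ℕ) → Set (Matrix (Fin n) (Fin n) V)
  cone : ∀ α n, IsVCone (C α n)
  herm : ∀ α n, ∀ A ∈ C α n, star A = A
  filtered : ∀ α β : Γ, ∃ γ, ∀ n, C γ n ⊆ C α n ∩ C β n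
  proper : ∀ n (A : Matrix (Fin n) (Fin n) V), (∀ α, A ∈ C α n ∧ -A ∈ C α n) → A = 0
  compat : ∀ (α : Γ) (n m : ℕ) (X : Matrix (Fin n) (Fin m) ℂ),
    ∀ A ∈ C α n, sconj X A ∈ C α m

/-- An abstract local operator system: a local matrix *-ordering together with an
Archimedean matrix order unit. -/
structure LocalOpSys (Γ : Type) (V : Type) [AddCommGroup V] [Module ℂ V]
    [StarAddMonoid V] [StarModule ℂ V] extends LMOrder Γ V where
  e : V
  eherm : star e = e
  unit : ∀ (α : Γ) (n : ℕ) (A : Matrix (Fin n) (Fin n) V), star A = A →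
    ∃ r : ℝ, 0 < r ∧ (r : ℂ) • diagE e n - A ∈ C α n
  arch : ∀ (α : Γ) (n : ℕ) (A : Matrix (Fin n) (Fin n) V),
    (∀ r : ℝ, 0 < r → (r : ℂ) • diagE e n + A ∈ C α n) → A ∈ C α n

/-- An Archimedean local order unit space (`A.L.O.U.` space): ground-level cones only. -/
structure ALOU (Γ : Type) (V : Type) [AddCommGroup V] [Module ℂ V]
    [StarAddMonoid V] [StarModule ℂ V] where
  pos : Γ → Set V
  cone : ∀ α, IsVCone (pos α)
  herm : ∀ α, ∀ v ∈ pos α, star v = v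
  filtered : ∀ α β : Γ, ∃ γ, pos γ ⊆ pos α ∩ pos β
  proper : ∀ v : V, (∀ α, v ∈ pos α ∧ -v ∈ pos α) → v = 0
  e : V
  eherm : star e = e
  unit : ∀ (α : Γ) (v : V), star v = v → ∃ r : ℝ, 0 < r ∧ (r : ℂ) • e - v ∈ pos α
  arch : ∀ (α : Γ) (v : V), (∀ r : ℝ, 0 < r → (r : ℂ) • e + v ∈ pos α) → v ∈ pos α

/-- The minimal matrix cones over a family of ground-level cones. -/
def Cmin {Γ : Type} (pos : Γ → Set V) (α : Γ) (n : ℕ) :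
    Set (Matrix (Fin n) (Fin n) V) :=
  {A | ∀ L : Fin n → ℂ, (∑ i, ∑ j, ((starRingEnd ℂ) (L i) * L j) • A i j) ∈ pos α}

/-- The maximal matrix cones over a family of ground-level cones:
sums `Σ aᵢ ⊗ vᵢ` with `aᵢ` positive semidefinite scalar matrices and `vᵢ` positive. -/
def Dmax {Γ : Type} (pos : Γ → Set V) (α : Γ) (n : ℕ) :
    Set (Matrix (Fin n) (Fin n) V) :=
  {A | ∃ (k : ℕ) (a : Fin k → Matrix (Fin n) (Fin n) ℂ) (v : Fin k → V),
    (∀ i, (a i).PosSemidef) ∧ (∀ i, v i ∈ pos α) ∧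
    A = Matrix.of fun p q => ∑ i, (a i p q) • v i}

/-- The amplification `φ⁽ᵏ⁾` of a matrix-valued linear map, realized on the index
type `Fin k × ι`. -/
def ampP {S : Type} [AddCommGroup S] [Module ℂ S] {k : ℕ} {ι : Type} [Fintype ι]
    (φ : S →ₗ[ℂ] Matrix ι ι ℂ) (M : Matrix (Fin k) (Fin k) S) :
    Matrix (Fin k × ι) (Fin k × ι) ℂ :=
  Matrix.of fun ip jq => φ (M ip.1 jq.1) ip.2 jq.2

end

/-- local Krein extension: a local positive linear functional on a
local operator system `S` inside a unital Pro-C*-algebra `A` extends to a local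
positive linear functional on `A` with the same value at the unit. -/
theorem statement13 {Γ A : Type} [Ring A] [Algebra ℂ A] [StarRing A] [StarModule ℂ A]
    (T : LocalOpSys Γ A) (hTe : T.e = 1)
    (S : Submodule ℂ A) (h1 : (1 : A) ∈ S) (hstar : ∀ a ∈ S, star a ∈ S)
    (φ : S →ₗ[ℂ] ℂ) (α : Γ)
    (hφ : ∀ a : S, (Matrix.of fun _ _ => (a : A) : Matrix (Fin 1) (Fin 1) A) ∈ T.C α 1 →
      ∃ t : ℝ, 0 ≤ t ∧ φ a = (t : ℂ)) :
    ∃ Φ : A →ₗ[ℂ] ℂ, (∀ a : S, Φ a = φ a) ∧ Φ 1 = φ ⟨1, h1⟩ ∧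
      ∃ α' : Γ, ∀ a : A,
        (Matrix.of fun _ _ => a : Matrix (Fin 1) (Fin 1) A) ∈ T.C α' 1 →
        ∃ t : ℝ, 0 ≤ t ∧ Φ a = (t : ℂ) := by
  classical
  letI : Module ℝ A := Module.compHom A (algebraMap ℝ ℂ)
  have hsmul : ∀ (r : ℝ) (a : A), r • a = (r : ℂ) • a := fun r a => rfl
  letI : IsScalarTower ℝ ℂ A := ⟨fun r c a => by rw [Complex.real_smul, hsmul, mul_smul]⟩
  set M : A → Matrix (Fin 1) (Fin 1) A := fun a => Matrix.of fun _ _ => a with hMdef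
  have hMsmul : ∀ (c : ℂ) (a : A), M (c • a) = c • M a := by
    intro c a; ext i j; simp [M]
  have hMadd : ∀ a b : A, M (a + b) = M a + M b := by
    intro a b; ext i j; simp [M]
  have hdiag1 : diagE (1 : A) 1 = M (1 : A) := by
    ext i j
    obtain rfl : i = j := Subsingleton.elim i j
    simp [diagE, M]
  obtain ⟨hC0, hCadd, hCsmul⟩ := T.cone α 1
  -- `M 1` lies in the cone
  have hM1 : M (1 : A) ∈ T.C α 1 := by
    obtain ⟨r, hr, hmem⟩ := T.unit α 1 0 (by simp)
    rw [sub_zero, hTe] at hmem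
    have h2 := hCsmul r⁻¹ (by positivity) _ hmem
    rw [smul_smul, ← Complex.ofReal_mul, inv_mul_cancel₀ hr.ne', Complex.ofReal_one,
      one_smul, hdiag1] at h2
    exact h2
  obtain ⟨t0, ht0, hφ1⟩ := hφ ⟨1, h1⟩ hM1
  -- positive functionals are real on hermitian elements of S
  have hφreal : ∀ a : S, star (a : A) = (a : A) → ∃ t : ℝ, φ a = (t : ℂ) := by
    intro a ha
    obtain ⟨r, hr, hmem⟩ := T.unit α 1 (-(M (a : A))) (by
      ext i j
      simp only [Matrix.star_apply, Matrix.neg_apply, M, Matrix.of_apply, star_neg, ha])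
    rw [hTe, sub_neg_eq_add] at hmem
    have heq : (r : ℂ) • diagE (1 : A) 1 + M (a : A) = M ((r : ℂ) • (1 : A) + (a : A)) := by
      rw [hMadd, hMsmul, hdiag1]
    rw [heq] at hmem
    obtain ⟨t1, ht1, hval⟩ := hφ ((r : ℂ) • ⟨1, h1⟩ + a) hmem
    refine ⟨t1 - r * t0, ?_⟩
    have hφv : φ ((r : ℂ) • ⟨1, h1⟩ + a) = (r : ℂ) * φ ⟨1, h1⟩ + φ a := by
      rw [map_add, map_smul, smul_eq_mul]
    rw [hφv, hφ1] at hval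
    have : φ a = (t1 : ℂ) - (r : ℂ) * (t0 : ℂ) := by rw [← hval]; ring
    rw [this]; push_cast; ring
  -- the real subspace of hermitian elements
  set H : Submodule ℝ A :=
    { carrier := {a : A | star a = a}
      add_mem' := fun {a b} ha hb => by
        simp only [Set.mem_setOf_eq] at *
        rw [star_add, ha, hb]
      zero_mem' := star_zero A
      smul_mem' := fun r a ha => by
        simp only [Set.mem_setOf_eq] at *
        rw [hsmul, star_smul, ha, Complex.star_def, Complex.conj_ofReal] } with hHdef
  -- the cone in H
  set s : PointedCone ℝ H :=
    { carrier := {x : H | M (x : A) ∈ T.C α 1}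
      zero_mem' := by
        simp only [Set.mem_setOf_eq]
        convert hC0 using 1
        ext i j; simp [M]
      smul_mem' := fun c {x} hx => by
        simp only [Set.mem_setOf_eq] at *
        rw [show ((c • x : H) : A) = ((c : ℝ) : ℂ) • (x : A) from hsmul c _, hMsmul]
        exact hCsmul c c.2 _ hx
      add_mem' := fun {x y} hx hy => by
        simp only [Set.mem_setOf_eq] at *
        rw [show ((x + y : H) : A) = (x : A) + (y : A) from rfl, hMadd]
        exact hCadd _ hx _ hy } with hsdef
  -- the domain: hermitian elements of S
  set Sh : Submodule ℝ H :=
    { carrier := {x : H | (x : A) ∈ S}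
      add_mem' := fun {x y} hx hy => S.add_mem hx hy
      zero_mem' := S.zero_mem
      smul_mem' := fun c x hx => by
        show ((c • x : H) : A) ∈ S
        rw [show ((c • x : H) : A) = (c : ℂ) • (x : A) from hsmul c _]
        exact S.smul_mem _ hx } with hShdef
  set toS : Sh → S := fun x => ⟨((x : H) : A), x.2⟩ with htoSdef
  set flin : Sh →ₗ[ℝ] ℝ :=
    { toFun := fun x => (φ (toS x)).re
      map_add' := fun x y => by
        have h : toS (x + y) = toS x + toS y := Subtype.ext rfl
        rw [h, map_add, Complex.add_re]
      map_smul' := fun c x => by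
        have h : toS (c • x) = (c : ℂ) • toS x := Subtype.ext (hsmul c _)
        rw [h, map_smul, RingHom.id_apply, smul_eq_mul, Complex.re_ofReal_mul,
          smul_eq_mul] } with hflindef
  set f : H →ₗ.[ℝ] ℝ := ⟨Sh, flin⟩ with hfdef
  have hnonneg : ∀ x : f.domain, (x : H) ∈ s → 0 ≤ f x := by
    intro x hx
    obtain ⟨t, ht, hv⟩ := hφ (toS x) hx
    show 0 ≤ (φ (toS x)).re
    rw [hv]
    simpa using ht
  have hdense : ∀ y : H, ∃ x : f.domain, (x : H) + y ∈ s := by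
    intro y
    obtain ⟨r, hr, hmem⟩ := T.unit α 1 (-(M (y : A))) (by
      ext i j
      simp only [Matrix.star_apply, Matrix.neg_apply, M, Matrix.of_apply, star_neg]
      rw [y.2])
    rw [hTe, sub_neg_eq_add] at hmem
    refine ⟨⟨⟨r • (1 : A), ?_⟩, ?_⟩, ?_⟩
    · show star (r • (1 : A)) = r • (1 : A)
      rw [hsmul, star_smul, star_one, Complex.star_def, Complex.conj_ofReal]
    · show (r • (1 : A)) ∈ S
      rw [hsmul]
      exact S.smul_mem _ h1
    · show M (r • (1 : A) + (y : A)) ∈ T.C α 1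
      rw [hsmul, hMadd, hMsmul, ← hdiag1]
      exact hmem
  obtain ⟨g, hg, hgpos⟩ := riesz_extension s f hnonneg hdense
  -- the real part map
  have hstar2 : ∀ a : A, star ((2 : ℂ)⁻¹ • (a + star a)) = (2 : ℂ)⁻¹ • (a + star a) := by
    intro a
    rw [star_smul, star_add, star_star, add_comm (star a) a]
    congr 1
    simp [Complex.star_def]
  set rehL : A →ₗ[ℝ] H :=
    { toFun := fun a => ⟨(2 : ℂ)⁻¹ • (a + star a), hstar2 a⟩
      map_add' := fun a b => Subtype.ext (by
        show (2 : ℂ)⁻¹ • (a + b + star (a + b))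
            = (2 : ℂ)⁻¹ • (a + star a) + (2 : ℂ)⁻¹ • (b + star b)
        rw [star_add, ← smul_add]
        congr 1
        abel)
      map_smul' := fun r a => Subtype.ext (by
        show (2 : ℂ)⁻¹ • (r • a + star (r • a)) = r • ((2 : ℂ)⁻¹ • (a + star a))
        rw [hsmul, star_smul, Complex.star_def, Complex.conj_ofReal, ← smul_add,
          hsmul, smul_comm]) } with hrehLdef
  set fr : A →ₗ[ℝ] ℝ := g ∘ₗ rehL with hfrdef
  have hrehL_val : ∀ a : A, ((rehL a : H) : A) = (2 : ℂ)⁻¹ • (a + star a) := fun a => rfl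
  have hext : ∀ a : A, LinearMap.extendTo𝕜' fr a
      = ((fr a : ℝ) : ℂ) - Complex.I * ((fr (Complex.I • a) : ℝ) : ℂ) := by
    intro a
    rw [LinearMap.extendTo𝕜', LinearMap.extendTo𝕜'_apply]
    norm_num
  have hgval : ∀ (x : H) (hx : (x : A) ∈ S), g x = (φ ⟨(x : A), hx⟩).re := by
    intro x hx
    exact hg ⟨x, hx⟩
  have hmain : ∀ a : S, LinearMap.extendTo𝕜' fr ↑a = φ a := by
    intro a
    have hPmem : ((rehL ↑a : H) : A) ∈ S := by
      rw [hrehL_val]; exact S.smul_mem _ (S.add_mem a.2 (hstar _ a.2))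
    have hQmem : ((rehL (Complex.I • (↑a : A)) : H) : A) ∈ S := by
      rw [hrehL_val]
      refine S.smul_mem _ (S.add_mem (S.smul_mem _ a.2) ?_)
      rw [star_smul, Complex.star_def, Complex.conj_I]
      exact S.smul_mem _ (hstar _ a.2)
    set P : S := ⟨_, hPmem⟩ with hPdef
    set Q : S := ⟨_, hQmem⟩ with hQdef
    obtain ⟨tP, htP⟩ := hφreal P (rehL (↑a : A)).2
    obtain ⟨tQ, htQ⟩ := hφreal Q (rehL (Complex.I • (↑a : A))).2
    have hPQ : a = P - Complex.I • Q := by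
      apply Subtype.ext
      show (a : A) = (P : A) - Complex.I • (Q : A)
      rw [show (P : A) = (2 : ℂ)⁻¹ • ((a : A) + star (a : A)) from hrehL_val _,
        show (Q : A) = (2 : ℂ)⁻¹ • (Complex.I • (a : A) + star (Complex.I • (a : A)))
          from hrehL_val _, star_smul, Complex.star_def, Complex.conj_I]
      match_scalars <;> simp [Complex.ext_iff] <;> norm_num
    have hφa : φ a = φ P - Complex.I * φ Q := by
      rw [hPQ, map_sub, map_smul, smul_eq_mul]
    have hfrP : fr (↑a : A) = (φ P).re := hgval _ hPmem
    have hfrQ : fr (Complex.I • (↑a : A)) = (φ Q).re := hgval _ hQmem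
    rw [hext, hfrP, hfrQ, hφa, htP, htQ]
    simp
  refine ⟨LinearMap.extendTo𝕜' fr, hmain, hmain ⟨1, h1⟩, α, fun a hmem => ?_⟩
  have ha : star a = a := by
    have h := T.herm α 1 _ hmem
    have h2 := congrFun (congrFun h 0) 0
    simpa [Matrix.star_apply] using h2
  have haH : a ∈ H := ha
  have hre_a : rehL a = ⟨a, haH⟩ := Subtype.ext (by
    rw [hrehL_val, ha, ← two_smul ℂ a, smul_smul]
    norm_num)
  have him_a : rehL (Complex.I • a) = 0 := by
    apply Subtype.ext
    rw [hrehL_val, star_smul, Complex.star_def, Complex.conj_I, ha]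
    show (2 : ℂ)⁻¹ • (Complex.I • a + (-Complex.I) • a) = ((0 : H) : A)
    rw [neg_smul, add_neg_cancel, smul_zero]
    rfl
  refine ⟨g ⟨a, haH⟩, hgpos ⟨a, haH⟩ hmem, ?_⟩
  rw [hext, show fr a = g (rehL a) from rfl,
    show fr (Complex.I • a) = g (rehL (Complex.I • a)) from rfl, hre_a, him_a, map_zero]
  push_cast
  ring
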